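/- Let r and s be integers with r > s > 0 and let q be a real polynomial of degree at most s−1. Define h : (0,1) → ℝ by h(t) = t^{r−1/2} · (d^{r+1}/dt^{r+1})[ √t (1−t)^{r−s} q(t) ], i.e., t^{r−1/2} times the (r+1)-st derivative of the function t ↦ t^{1/2}(1−t)^{r−s} q(t). If h vanishes at s distinct points of (0,1), then q is the zero polynomial. -/

import Mathlib

open Real

open Polynomial Finset

namespace St11

/-- `l` is a strictly increasing list of indices at which `f` is nonzero with
alternating signs. -/
def AltOn (f : ℕ → ℝ) (l : List ℕ) : Prop :=
  l.Chain' (· < ·) ∧ l.Chain' (fun i j => f i * f j < 0) ∧ ∀ i ∈ l, f i ≠ 0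

lemma chain'_of_mem {α : Type*} {R S : α → α → Prop} {l : List α}
    (h : ∀ a ∈ l, ∀ b ∈ l, R a b → S a b) (hc : l.Chain' R) : l.Chain' S := by
  rw [List.Chain', List.isChain_iff_getElem] at hc ⊢
  intro i hi
  exact h _ (List.getElem_mem _) _ (List.getElem_mem _) (hc i hi)

lemma AltOn.of_sign {f g : ℕ → ℝ} {l : List ℕ} (h : AltOn f l)
    (hsg : ∀ i ∈ l, ∀ j ∈ l, f i * f j < 0 → g i * g j < 0)
    (hnz : ∀ i ∈ l, f i ≠ 0 → g i ≠ 0) : AltOn g l :=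
  ⟨h.1, chain'_of_mem hsg h.2.1, fun i hi => hnz i hi (h.2.2 i hi)⟩

lemma AltOn.map_succ {f : ℕ → ℝ} {g : ℕ → ℝ} {l : List ℕ}
    (h : AltOn f l) (hfg : ∀ k, ∃ c : ℝ, 0 < c ∧ g (k+1) = c * f k) :
    AltOn g (l.map (· + 1)) := by
  obtain ⟨h1, h2, h3⟩ := h
  refine ⟨?_, ?_, ?_⟩
  · rw [List.Chain', List.isChain_map]
    exact h1.imp fun a b hab => by omega
  · rw [List.Chain', List.isChain_map]
    refine h2.imp fun a b hab => ?_
    obtain ⟨c, hc, hgc⟩ := hfg a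
    obtain ⟨d, hd, hgd⟩ := hfg b
    rw [hgc, hgd]
    nlinarith [mul_neg_of_pos_of_neg (mul_pos hc hd) hab]
  · intro i hi
    simp only [List.mem_map] at hi
    obtain ⟨a, ha, rfl⟩ := hi
    obtain ⟨c, hc, hgc⟩ := hfg a
    rw [hgc]
    exact mul_ne_zero (ne_of_gt hc) (h3 a ha)


lemma rolle_finset (P : Polynomial ℝ) :
    ∀ (n : ℕ) (S : Finset ℝ) (hS : S.Nonempty), S.card = n →
    (∀ x ∈ S, P.eval x = 0) →
    ∃ T : Finset ℝ, (∀ y ∈ T, (Polynomial.derivative P).eval y = 0 ∧ S.min' hS < y) ∧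
      S.card ≤ T.card + 1 := by
  intro n
  induction n with
  | zero => intro S hS hcard _; exact absurd hcard (by simp [Finset.card_ne_zero_of_mem hS.choose_spec])
  | succ n ih =>
    intro S hS hcard hroot
    rcases Nat.eq_zero_or_pos n with hn | hn
    · exact ⟨∅, by simp, by omega⟩
    · set x₁ := S.min' hS with hx₁
      have hx₁S : x₁ ∈ S := S.min'_mem hS
      set S' := S.erase x₁ with hS'
      have hcard' : S'.card = n := by
        rw [hS', Finset.card_erase_of_mem hx₁S, hcard]; omega
      have hS'ne : S'.Nonempty := Finset.card_pos.mp (by omega)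
      set x₂ := S'.min' hS'ne with hx₂
      have hx₂S' : x₂ ∈ S' := S'.min'_mem hS'ne
      have hx₂S : x₂ ∈ S := Finset.mem_of_mem_erase hx₂S'
      have hlt : x₁ < x₂ :=
        lt_of_le_of_ne (S.min'_le _ hx₂S) (Ne.symm (Finset.ne_of_mem_erase hx₂S'))
      -- Rolle between x₁ and x₂
      obtain ⟨y, hy, hy0⟩ := exists_deriv_eq_zero hlt
        ((P.continuous).continuousOn)
        (by rw [hroot x₁ hx₁S, hroot x₂ hx₂S])
      rw [Polynomial.deriv] at hy0
      obtain ⟨T', hT', hcardT'⟩ := ih S' hS'ne hcard' (fun x hx => hroot x (Finset.mem_of_mem_erase hx))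
      have hyT' : y ∉ T' := fun hmem => absurd ((hT' y hmem).2) (by
        push_neg
        exact le_of_lt (lt_of_lt_of_le hy.2 (le_of_eq rfl)))
      refine ⟨insert y T', ?_, ?_⟩
      · intro z hz
        rcases Finset.mem_insert.mp hz with rfl | hz'
        · exact ⟨hy0, hy.1⟩
        · exact ⟨(hT' z hz').1, lt_trans hlt (hT' z hz').2⟩
      · rw [Finset.card_insert_of_notMem hyT']
        omega


lemma extra_root (P : Polynomial ℝ) {x₁ : ℝ} (hx : 0 < x₁)
    (hroot : P.eval x₁ = 0)
    (hsign : 0 < P.coeff 0 *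
      P.coeff ((Polynomial.derivative P).natTrailingDegree + 1)) :
    ∃ z, 0 < z ∧ z < x₁ ∧ (Polynomial.derivative P).eval z = 0 := by
  set P' := Polynomial.derivative P with hP'
  set m := P'.natTrailingDegree with hm
  set c0 := P.coeff 0 with hc0
  set cj := P.coeff (m + 1) with hcj
  have hc0ne : c0 ≠ 0 := fun h => by rw [h] at hsign; simp at hsign
  have hcjne : cj ≠ 0 := fun h => by rw [h] at hsign; simp at hsign
  -- trailing coefficient of P'
  have hcoeffP' : P'.coeff m = cj * (m + 1 : ℝ) := by
    rw [hP', Polynomial.coeff_derivative]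
  -- factor P' = X^m * R
  obtain ⟨R, hR⟩ : (Polynomial.X : Polynomial ℝ) ^ m ∣ P' :=
    Polynomial.X_pow_dvd_iff.mpr fun d hd =>
      Polynomial.coeff_eq_zero_of_lt_natTrailingDegree hd
  have hR0 : R.coeff 0 = cj * (m + 1 : ℝ) := by
    rw [← hcoeffP', hR]
    simpa using (Polynomial.coeff_X_pow_mul R m 0).symm
  -- MVT point
  obtain ⟨ξ, hξ, hξval⟩ := exists_deriv_eq_slope (fun x => P.eval x) hx
    (P.continuous.continuousOn) (fun x _ => (P.hasDerivAt x).differentiableAt.differentiableWithinAt)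
  rw [Polynomial.deriv] at hξval
  have hξval' : P'.eval ξ = - c0 / x₁ := by
    rw [hξval, hroot, ← Polynomial.coeff_zero_eq_eval_zero]
    simp only [sub_zero, zero_sub, hc0]
  -- point near 0 where sign of P' equals sign of cj
  have hRcont : ContinuousAt (fun t => (R.eval 0) * R.eval t) 0 :=
    (continuous_const.mul R.continuous).continuousAt
  have hRne : R.eval 0 ≠ 0 := by
    rw [← Polynomial.coeff_zero_eq_eval_zero, hR0]
    exact mul_ne_zero hcjne (by positivity)
  have hRpos : (0:ℝ) < R.eval 0 * R.eval 0 := mul_self_pos.mpr hRne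
  have hev : ∀ᶠ t in nhds (0:ℝ), 0 < R.eval 0 * R.eval t :=
    hRcont.eventually (eventually_gt_nhds hRpos)
  have hev2 : ∀ᶠ t in nhdsWithin (0:ℝ) (Set.Ioi 0),
      0 < R.eval 0 * R.eval t ∧ t ∈ Set.Ioo (0:ℝ) ξ :=
    (hev.filter_mono nhdsWithin_le_nhds).and
      (Filter.eventually_of_mem (Ioo_mem_nhdsGT_of_mem ⟨le_refl _, hξ.1⟩) fun t ht => ht)
  obtain ⟨u, hu1, hu2⟩ := hev2.exists
  -- sign of P' at u
  have hevalu : P'.eval u = u ^ m * R.eval u := by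
    rw [hR]; simp [Polynomial.eval_pow]
  have hupow : (0:ℝ) < u ^ m := pow_pos hu2.1 m
  have hR0eval : R.eval 0 = cj * (m + 1 : ℝ) := by
    rw [← Polynomial.coeff_zero_eq_eval_zero, hR0]
  have hm1 : (0:ℝ) < (m + 1 : ℝ) := by positivity
  have hsignu : 0 < c0 * P'.eval u := by
    rw [hevalu]
    rw [hR0eval] at hu1
    have hcj2 : (0:ℝ) < (cj * cj) * (m + 1 : ℝ) := mul_pos (mul_self_pos.mpr hcjne) hm1
    have h2 : 0 < c0 * R.eval u := by nlinarith [mul_pos hsign hu1, hcj2]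
    nlinarith [mul_pos hupow h2]
  have hsignξ : c0 * P'.eval ξ < 0 := by
    rw [hξval']
    have : c0 * (-c0 / x₁) = - (c0 * c0) / x₁ := by ring
    rw [this]
    have h2 : (0:ℝ) < c0 * c0 := mul_self_pos.mpr hc0ne
    exact div_neg_of_neg_of_pos (by linarith) hx
  -- IVT between u and ξ
  have huξ : u < ξ := hu2.2
  have hcont2 : ContinuousOn (fun t => c0 * P'.eval t) (Set.Icc u ξ) :=
    (continuous_const.mul P'.continuous).continuousOn
  have : (0:ℝ) ∈ Set.Ioo (c0 * P'.eval ξ) (c0 * P'.eval u) := ⟨hsignξ, hsignu⟩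
  obtain ⟨z, hz, hz0⟩ := intermediate_value_Ioo' (le_of_lt huξ) hcont2 this
  refine ⟨z, lt_trans hu2.1 hz.1, lt_trans hz.2 hξ.2, ?_⟩
  have hz0' : c0 * P'.eval z = 0 := hz0
  rcases mul_eq_zero.mp hz0' with h | h
  · exact absurd h hc0ne
  · exact h


lemma AltOn.cons {f : ℕ → ℝ} {l : List ℕ} {a : ℕ} (h : AltOn f l)
    (ha : f a ≠ 0) (hhead : ∀ b ∈ l.head?, a < b ∧ f a * f b < 0) :
    AltOn f (a :: l) := by
  refine ⟨List.isChain_cons.mpr ⟨fun b hb => (hhead b hb).1, h.1⟩,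
          List.isChain_cons.mpr ⟨fun b hb => (hhead b hb).2, h.2.1⟩, ?_⟩
  intro i hi
  rcases List.mem_cons.mp hi with rfl | hi
  · exact ha
  · exact h.2.2 i hi

lemma AltOn.tail' {f : ℕ → ℝ} {a : ℕ} {l : List ℕ} (h : AltOn f (a :: l)) : AltOn f l :=
  ⟨h.1.tail, h.2.1.tail, fun i hi => h.2.2 i (List.mem_cons_of_mem a hi)⟩

lemma descartes_chain :
    ∀ (N : ℕ) (P : Polynomial ℝ), P.natDegree ≤ N → P ≠ 0 →
    ∀ S : Finset ℝ, (∀ x ∈ S, 0 < x ∧ P.eval x = 0) →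
    ∃ l : List ℕ, AltOn P.coeff l ∧ S.card + 1 ≤ l.length ∧
      l.head? = some P.natTrailingDegree := by
  intro N
  induction N using Nat.strong_induction_on with
  | _ N ih =>
  intro P hdeg hP S hroots
  rcases S.eq_empty_or_nonempty with rfl | hS
  · refine ⟨[P.natTrailingDegree], ⟨List.isChain_singleton _, List.isChain_singleton _, ?_⟩,
      by simp, rfl⟩
    intro i hi
    simp only [List.mem_singleton] at hi; subst hi
    exact Polynomial.trailingCoeff_nonzero_iff_nonzero.mpr hP
  rcases eq_or_ne (P.coeff 0) 0 with h0 | h0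
  · -- case P = Q * X
    have hQ : P.divX * Polynomial.X = P := by
      have := P.divX_mul_X_add
      rwa [h0, map_zero, add_zero] at this
    set Q := P.divX with hQdef
    have hQne : Q ≠ 0 := fun h => hP (by rw [← hQ, h, zero_mul])
    have hPdeg_pos : 1 ≤ P.natDegree := by
      by_contra hcon
      push_neg at hcon
      have hd0 : P.natDegree = 0 := by omega
      exact hP (by
        have := Polynomial.eq_C_of_natDegree_eq_zero hd0
        rw [this, h0, map_zero])
    have hN1 : 1 ≤ N := le_trans hPdeg_pos hdeg
    have hQdeg : Q.natDegree < N := by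
      have hQd : Q.natDegree = P.natDegree - 1 :=
        Polynomial.natDegree_divX_eq_natDegree_tsub_one
      omega
    have hSQ : ∀ x ∈ S, 0 < x ∧ Q.eval x = 0 := by
      intro x hx
      obtain ⟨hxpos, hxr⟩ := hroots x hx
      refine ⟨hxpos, ?_⟩
      rw [← hQ] at hxr
      simp only [Polynomial.eval_mul, Polynomial.eval_X] at hxr
      rcases mul_eq_zero.mp hxr with h | h
      · exact h
      · exact absurd h (ne_of_gt hxpos)
    obtain ⟨l, hAlt, hlen, hhead⟩ := ih Q.natDegree hQdeg Q le_rfl hQne S hSQ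
    have hmap : AltOn P.coeff (l.map (· + 1)) := by
      refine hAlt.map_succ (fun k => ⟨1, one_pos, ?_⟩)
      rw [one_mul, ← hQ, Polynomial.coeff_mul_X]
    refine ⟨l.map (· + 1), hmap, by simpa using hlen, ?_⟩
    rw [List.head?_map, hhead]
    have : P.natTrailingDegree = Q.natTrailingDegree + 1 := by
      rw [← hQ, Polynomial.natTrailingDegree_mul hQne Polynomial.X_ne_zero,
        Polynomial.natTrailingDegree_X]
    rw [this]
    rfl
  · -- case P.coeff 0 ≠ 0
    have hntd : P.natTrailingDegree = 0 :=
      Polynomial.natTrailingDegree_eq_zero.mpr (Or.inr h0)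
    set P' := Polynomial.derivative P with hP'def
    have hP'ne : P' ≠ 0 := by
      intro h
      have hd0 : P.natDegree = 0 := Polynomial.natDegree_eq_zero_of_derivative_eq_zero h
      obtain ⟨x, hx⟩ := hS
      have hxr := (hroots x hx).2
      rw [Polynomial.eq_C_of_natDegree_eq_zero hd0] at hxr
      simp only [Polynomial.eval_C] at hxr
      exact h0 hxr
    set m := P'.natTrailingDegree with hmdef
    have hcoeffrel : ∀ k, P'.coeff k = P.coeff (k + 1) * ((k : ℝ) + 1) :=
      fun k => Polynomial.coeff_derivative P k
    have hcj : P.coeff (m + 1) ≠ 0 := by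
      have h1 : P'.coeff m ≠ 0 :=
        Polynomial.trailingCoeff_nonzero_iff_nonzero.mpr hP'ne
      rw [hcoeffrel m] at h1
      intro h
      rw [h, zero_mul] at h1
      exact h1 rfl
    have hPdeg_ne : P.natDegree ≠ 0 := by
      intro h
      exact hP'ne (by rw [hP'def, Polynomial.eq_C_of_natDegree_eq_zero h]; simp)
    have hP'deg : P'.natDegree < N :=
      lt_of_lt_of_le (Polynomial.natDegree_derivative_lt hPdeg_ne) hdeg
    have hx₁mem : S.min' hS ∈ S := S.min'_mem hS
    have hx₁pos : 0 < S.min' hS := (hroots _ hx₁mem).1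
    obtain ⟨T, hT, hTcard⟩ := rolle_finset P S.card S hS rfl (fun x hx => (hroots x hx).2)
    rcases lt_trichotomy (P.coeff 0 * P.coeff (m + 1)) 0 with hsgn | hsgn | hsgn
    · -- opposite signs: prepend 0
      have hTroots : ∀ y ∈ T, 0 < y ∧ P'.eval y = 0 :=
        fun y hy => ⟨lt_trans hx₁pos (hT y hy).2, (hT y hy).1⟩
      obtain ⟨l, hAlt, hlen, hhead⟩ := ih P'.natDegree hP'deg P' le_rfl hP'ne T hTroots
      have hmap : AltOn P.coeff (l.map (· + 1)) := by
        refine hAlt.map_succ (fun k => ⟨1 / ((k : ℝ) + 1), by positivity, ?_⟩)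
        rw [hcoeffrel k]
        field_simp
      refine ⟨0 :: l.map (· + 1), hmap.cons h0 ?_, by simp; omega, by
        simp only [List.head?_cons, hntd]⟩
      intro b hb
      rw [List.head?_map, hhead] at hb
      simp only [Option.mem_map, Option.mem_some_iff] at hb
      obtain ⟨x, rfl, rfl⟩ := hb
      exact ⟨Nat.succ_pos _, hsgn⟩
    · exact absurd hsgn (mul_ne_zero h0 hcj)
    · -- same signs: extra root, replace head
      obtain ⟨z, hz0, hz1, hzroot⟩ := extra_root P hx₁pos (hroots _ hx₁mem).2 hsgn
      have hzT : z ∉ T := fun hmem => absurd (hT z hmem).2 (by linarith)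
      set T2 := insert z T with hT2def
      have hT2card : S.card + 1 ≤ T2.card + 1 := by
        rw [hT2def, Finset.card_insert_of_notMem hzT]; omega
      have hT2roots : ∀ y ∈ T2, 0 < y ∧ P'.eval y = 0 := by
        intro y hy
        rcases Finset.mem_insert.mp hy with rfl | hy'
        · exact ⟨hz0, hzroot⟩
        · exact ⟨lt_trans hx₁pos (hT y hy').2, (hT y hy').1⟩
      obtain ⟨l, hAlt, hlen, hhead⟩ := ih P'.natDegree hP'deg P' le_rfl hP'ne T2 hT2roots
      have hmap : AltOn P.coeff (l.map (· + 1)) := by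
        refine hAlt.map_succ (fun k => ⟨1 / ((k : ℝ) + 1), by positivity, ?_⟩)
        rw [hcoeffrel k]
        field_simp
      have hmaphead : (l.map (· + 1)).head? = some (m + 1) := by
        rw [List.head?_map, hhead]; rfl
      rcases hl : l.map (· + 1) with _ | ⟨b, rest⟩
      · rw [hl] at hmaphead; exact absurd hmaphead (by simp)
      rw [hl] at hmaphead hmap
      have hb : b = m + 1 := by simpa using hmaphead
      subst hb
      refine ⟨0 :: rest, (hmap.tail').cons h0 ?_, ?_, by
        simp only [List.head?_cons, hntd]⟩
      · intro b' hb'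
        have hlt : m + 1 < b' := (List.isChain_cons.mp hmap.1).1 b' hb'
        have halt : P.coeff (m + 1) * P.coeff b' < 0 :=
          (List.isChain_cons.mp hmap.2.1).1 b' hb'
        refine ⟨by omega, ?_⟩
        nlinarith [mul_neg_of_pos_of_neg hsgn halt, sq_nonneg (P.coeff (m + 1))]
      · have : (l.map (· + 1)).length = l.length := List.length_map _
        rw [hl] at this
        simp only [List.length_cons] at this ⊢
        omega


lemma strip_one (p : Polynomial ℝ) {l : List ℕ}
    (h : AltOn (fun k => (-1:ℝ)^k * ((1 - Polynomial.X) * p).coeff k) l) :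
    ∃ l' : List ℕ, AltOn (fun k => (-1:ℝ)^k * p.coeff k) l' ∧ l.length ≤ l'.length := by
  set a : ℕ → ℝ := fun k => (-1:ℝ)^k * p.coeff k with ha
  set b : ℕ → ℝ := fun k => (-1:ℝ)^k * ((1 - Polynomial.X) * p).coeff k with hb
  have hbrec : ∀ k, b (k + 1) = a (k + 1) + a k := by
    intro k
    have hcoeff : ((1 - Polynomial.X) * p).coeff (k + 1) = p.coeff (k + 1) - p.coeff k := by
      rw [sub_mul, one_mul, Polynomial.coeff_sub, Polynomial.coeff_X_mul]
    simp only [hb, ha]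
    rw [hcoeff]
    push_cast
    ring
  have hb0 : b 0 = a 0 := by
    have hcoeff : ((1 - Polynomial.X) * p).coeff 0 = p.coeff 0 := by
      rw [sub_mul, one_mul, Polynomial.coeff_sub]
      simp [Polynomial.coeff_X_mul_zero]
    simp only [hb, ha]
    rw [hcoeff]
  set φ : ℕ → ℕ := fun k => if 0 < a k * b k then k else k - 1 with hφ
  have hkey : ∀ k, b k ≠ 0 → 0 < a (φ k) * b k := by
    intro k hbk
    by_cases hc : 0 < a k * b k
    · simp only [hφ, if_pos hc]
      exact hc
    · have hφk : φ k = k - 1 := by simp [hφ, hc]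
      rcases k with _ | k'
      · exfalso
        apply hc
        rw [hb0]
        exact mul_self_pos.mpr (by rwa [← hb0])
      · rw [hφk]
        push_neg at hc
        have hrec := hbrec k'
        have hbsq : 0 < b (k' + 1) * b (k' + 1) := mul_self_pos.mpr hbk
        have : a k' * b (k' + 1) = b (k' + 1) * b (k' + 1) - a (k' + 1) * b (k' + 1) := by
          rw [hrec]; ring
        simp only [Nat.add_sub_cancel]
        linarith
  have hφle : ∀ k, φ k ≤ k := by
    intro k
    by_cases hc : 0 < a k * b k <;> simp [hφ, hc] <;> omega
  have hφge : ∀ k, k - 1 ≤ φ k := by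
    intro k
    by_cases hc : 0 < a k * b k <;> simp [hφ, hc] <;> omega
  have hφalt : ∀ k k', k < k' → b k * b k' < 0 → a (φ k) * a (φ k') < 0 := by
    intro k k' hkk hprod
    have hbk : b k ≠ 0 := fun h => by rw [h] at hprod; simp at hprod
    have hbk' : b k' ≠ 0 := fun h => by rw [h] at hprod; simp at hprod
    have h1 := hkey k hbk
    have h2 := hkey k' hbk'
    nlinarith [mul_pos h1 h2]
  have hφlt : ∀ k k', k < k' → b k * b k' < 0 → φ k < φ k' := by
    intro k k' hkk hprod
    have hle : φ k ≤ φ k' := le_trans (hφle k) (le_trans (by omega) (hφge k'))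
    rcases lt_or_eq_of_le hle with h | h
    · exact h
    · exfalso
      have := hφalt k k' hkk hprod
      rw [h] at this
      nlinarith [this, mul_self_nonneg (a (φ k'))]
  have h1 := List.isChain_iff_getElem.mp h.1
  have h2 := List.isChain_iff_getElem.mp h.2.1
  refine ⟨l.map φ, ⟨?_, ?_, ?_⟩, le_of_eq (List.length_map φ).symm⟩
  · rw [List.Chain', List.isChain_map, List.isChain_iff_getElem]
    intro i hi
    exact hφlt _ _ (h1 i hi) (h2 i hi)
  · rw [List.Chain', List.isChain_map, List.isChain_iff_getElem]
    intro i hi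
    exact hφalt _ _ (h1 i hi) (h2 i hi)
  · intro i hi
    rw [List.mem_map] at hi
    obtain ⟨k, hk, rfl⟩ := hi
    have := hkey k (h.2.2 k hk)
    intro hcon
    rw [hcon] at this
    simp at this
  
lemma strip_pow (m : ℕ) : ∀ (p : Polynomial ℝ) (l : List ℕ),
    AltOn (fun k => (-1:ℝ)^k * ((1 - Polynomial.X)^m * p).coeff k) l →
    ∃ l', AltOn (fun k => (-1:ℝ)^k * p.coeff k) l' ∧ l.length ≤ l'.length := by
  induction m with
  | zero =>
    intro p l h
    have he : (1 - Polynomial.X : Polynomial ℝ)^0 * p = p := by ring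
    rw [he] at h
    exact ⟨l, h, le_rfl⟩
  | succ m ih =>
    intro p l h
    have he : (1 - Polynomial.X : Polynomial ℝ)^(m+1) * p
        = (1 - Polynomial.X)^m * ((1 - Polynomial.X) * p) := by ring
    rw [he] at h
    obtain ⟨l1, hl1, hlen1⟩ := ih ((1 - Polynomial.X) * p) l h
    obtain ⟨l2, hl2, hlen2⟩ := strip_one p hl1
    exact ⟨l2, hl2, le_trans hlen1 hlen2⟩


lemma iteratedDeriv_sqrt_mul_poly (p : Polynomial ℝ) (n : ℕ) :
    ∀ x : ℝ, 0 < x →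
    iteratedDeriv n (fun y => Real.sqrt y * p.eval y) x =
      ∑ k ∈ Finset.range (p.natDegree + 1),
        p.coeff k * (∏ j ∈ Finset.range n, ((k : ℝ) + 1/2 - j)) *
          x ^ ((k : ℝ) + 1/2 - n) := by
  induction n with
  | zero =>
    intro x hx
    rw [iteratedDeriv_zero]
    rw [Polynomial.eval_eq_sum_range, Finset.mul_sum]
    refine Finset.sum_congr rfl fun k hk => ?_
    rw [Finset.prod_range_zero, mul_one]
    have h1 : ((k:ℝ) + 1/2 - ((0:ℕ):ℝ)) = (k:ℝ) + 1/2 := by push_cast; ring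
    rw [h1, Real.rpow_add hx, Real.rpow_natCast, ← Real.sqrt_eq_rpow]
    ring
  | succ n ih =>
    intro x hx
    rw [iteratedDeriv_succ]
    have heq : iteratedDeriv n (fun z => Real.sqrt z * p.eval z)
        =ᶠ[nhds x] (fun y => ∑ k ∈ Finset.range (p.natDegree + 1),
          p.coeff k * (∏ j ∈ Finset.range n, ((k : ℝ) + 1/2 - j)) *
            y ^ ((k : ℝ) + 1/2 - n)) :=
      Filter.eventuallyEq_of_mem (Ioi_mem_nhds hx) (fun y hy => ih y hy)
    rw [heq.deriv_eq]
    have hD : HasDerivAt (fun y : ℝ => ∑ k ∈ Finset.range (p.natDegree + 1),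
        p.coeff k * (∏ j ∈ Finset.range n, ((k : ℝ) + 1/2 - j)) *
          y ^ ((k : ℝ) + 1/2 - n))
        (∑ k ∈ Finset.range (p.natDegree + 1),
          p.coeff k * (∏ j ∈ Finset.range n, ((k : ℝ) + 1/2 - j)) *
            (((k : ℝ) + 1/2 - n) * x ^ ((k : ℝ) + 1/2 - n - 1))) x := by
      refine HasDerivAt.fun_sum fun k _ => ?_
      exact (Real.hasDerivAt_rpow_const (Or.inl (ne_of_gt hx))).const_mul _
    rw [hD.deriv]
    refine Finset.sum_congr rfl fun k _ => ?_
    rw [Finset.prod_range_succ]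
    rw [show ((k:ℝ) + 1/2 - ((n+1 : ℕ):ℝ)) = (k:ℝ) + 1/2 - (n:ℝ) - 1 by push_cast; ring]
    ring


lemma csign (r k : ℕ) (hk : k ≤ r) :
    0 < (-1:ℝ)^(r - k) * ∏ j ∈ Finset.range (r + 1), ((k : ℝ) + 1/2 - j) := by
  have hsplit : (∏ j ∈ Finset.range (k + 1), ((k : ℝ) + 1/2 - j)) *
      ∏ j ∈ Finset.Ico (k + 1) (r + 1), ((k : ℝ) + 1/2 - j)
      = ∏ j ∈ Finset.range (r + 1), ((k : ℝ) + 1/2 - j) :=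
    Finset.prod_range_mul_prod_Ico _ (by omega)
  have h1 : 0 < ∏ j ∈ Finset.range (k + 1), ((k : ℝ) + 1/2 - j) := by
    refine Finset.prod_pos fun j hj => ?_
    rw [Finset.mem_range] at hj
    have : (j : ℝ) ≤ (k : ℝ) := by exact_mod_cast Nat.lt_succ_iff.mp hj
    linarith
  have h2 : ∏ j ∈ Finset.Ico (k + 1) (r + 1), ((k : ℝ) + 1/2 - j)
      = (-1:ℝ)^(r - k) * ∏ j ∈ Finset.Ico (k + 1) (r + 1), ((j : ℝ) - k - 1/2) := by
    have hcard : (Finset.Ico (k + 1) (r + 1)).card = r - k := by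
      rw [Nat.card_Ico]; omega
    rw [← hcard, ← Finset.prod_const (-1:ℝ), ← Finset.prod_mul_distrib]
    exact Finset.prod_congr rfl fun j hj => by ring
  have h3 : 0 < ∏ j ∈ Finset.Ico (k + 1) (r + 1), ((j : ℝ) - k - 1/2) := by
    refine Finset.prod_pos fun j hj => ?_
    rw [Finset.mem_Ico] at hj
    have : (k : ℝ) + 1 ≤ (j : ℝ) := by exact_mod_cast hj.1
    linarith
  have hsq : (-1:ℝ)^(r - k) * (-1:ℝ)^(r - k) = 1 := by
    rw [← pow_add]
    exact Even.neg_one_pow ⟨r - k, rfl⟩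
  rw [← hsplit, h2]
  have hre : (-1:ℝ)^(r - k) * ((∏ j ∈ Finset.range (k + 1), ((k : ℝ) + 1/2 - j)) *
        ((-1:ℝ)^(r - k) * ∏ j ∈ Finset.Ico (k + 1) (r + 1), ((j : ℝ) - k - 1/2)))
      = ((-1:ℝ)^(r - k) * (-1:ℝ)^(r - k)) *
        ((∏ j ∈ Finset.range (k + 1), ((k : ℝ) + 1/2 - j)) *
          ∏ j ∈ Finset.Ico (k + 1) (r + 1), ((j : ℝ) - k - 1/2)) := by ring
  rw [hre, hsq, one_mul]
  exact mul_pos h1 h3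

end St11


/-- Let `r > s > 0` and let `q` be a real polynomial of degree at
most `s-1`.  Define `h(t) = t^{r-1/2} · (d^{r+1}/dt^{r+1})[√t (1-t)^{r-s} q(t)]` for
`t ∈ (0,1)`.  If `h` vanishes at `s` distinct points of `(0,1)`, then `q = 0`. -/
theorem statement11 (r s : ℕ) (hs : 0 < s) (hrs : s < r)
    (q : Polynomial ℝ) (hq : q.natDegree ≤ s - 1)
    (t : Fin s → ℝ) (ht : Function.Injective t)
    (ht01 : ∀ i, t i ∈ Set.Ioo (0 : ℝ) 1)
    (hvanish : ∀ i, (t i) ^ ((r : ℝ) - 1 / 2)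
      * iteratedDeriv (r + 1)
          (fun x : ℝ => Real.sqrt x * (1 - x) ^ (r - s) * Polynomial.eval x q) (t i)
      = 0) :
    q = 0 := by
  by_contra hq0
  set m := r - s with hmdef
  set p := (1 - Polynomial.X)^m * q with hpdef
  have h1X : (1 - Polynomial.X : Polynomial ℝ) ≠ 0 := by
    intro h
    have h2 : (1 - Polynomial.X : Polynomial ℝ).coeff 1 = 0 := by rw [h]; simp
    rw [Polynomial.coeff_sub, Polynomial.coeff_X_one, Polynomial.coeff_one] at h2
    norm_num at h2
  have hpne : p ≠ 0 := mul_ne_zero (pow_ne_zero _ h1X) hq0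
  have hdegX : (1 - Polynomial.X : Polynomial ℝ).natDegree = 1 := by
    have h : (1 - Polynomial.X : Polynomial ℝ) = -(Polynomial.X - Polynomial.C 1) := by
      rw [Polynomial.C_1]; ring
    rw [h, Polynomial.natDegree_neg, Polynomial.natDegree_X_sub_C]
  have hpdeg : p.natDegree ≤ r - 1 := by
    have h1 : p.natDegree ≤ ((1 - Polynomial.X : Polynomial ℝ)^m).natDegree + q.natDegree :=
      Polynomial.natDegree_mul_le
    have h2 : ((1 - Polynomial.X : Polynomial ℝ)^m).natDegree ≤ m * 1 := by
      calc ((1 - Polynomial.X : Polynomial ℝ)^m).natDegree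
          ≤ m * (1 - Polynomial.X : Polynomial ℝ).natDegree := Polynomial.natDegree_pow_le
        _ = m * 1 := by rw [hdegX]
    omega
  set P : Polynomial ℝ := ∑ k ∈ Finset.range (p.natDegree + 1),
      Polynomial.C (p.coeff k * ∏ j ∈ Finset.range (r + 1), ((k : ℝ) + 1/2 - j)) *
        Polynomial.X ^ k with hPdef
  have hPcoeff : ∀ k, P.coeff k
      = p.coeff k * ∏ j ∈ Finset.range (r + 1), ((k : ℝ) + 1/2 - j) := by
    intro k
    rw [hPdef, Polynomial.finset_sum_coeff]
    by_cases hk : k ∈ Finset.range (p.natDegree + 1)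
    · rw [Finset.sum_eq_single k]
      · rw [Polynomial.coeff_C_mul, Polynomial.coeff_X_pow, if_pos rfl, mul_one]
      · intro b _ hbk
        rw [Polynomial.coeff_C_mul, Polynomial.coeff_X_pow, if_neg (Ne.symm hbk), mul_zero]
      · intro h; exact absurd hk h
    · have hk' : p.natDegree < k := by rw [Finset.mem_range] at hk; omega
      have hzero : p.coeff k = 0 := Polynomial.coeff_eq_zero_of_natDegree_lt hk'
      rw [hzero, zero_mul]
      refine Finset.sum_eq_zero fun b hb => ?_
      rw [Finset.mem_range] at hb
      rw [Polynomial.coeff_C_mul, Polynomial.coeff_X_pow, if_neg (by omega), mul_zero]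
  have hfun : (fun x : ℝ => Real.sqrt x * (1 - x) ^ m * Polynomial.eval x q)
      = fun y : ℝ => Real.sqrt y * p.eval y := by
    funext y
    rw [hpdef]
    simp only [Polynomial.eval_mul, Polynomial.eval_pow, Polynomial.eval_sub,
      Polynomial.eval_one, Polynomial.eval_X]
    ring
  have hPeval : ∀ i, P.eval (t i) = 0 := by
    intro i
    obtain ⟨hti0, hti1⟩ := ht01 i
    have hvan := hvanish i
    rw [hfun] at hvan
    rw [St11.iteratedDeriv_sqrt_mul_poly p (r + 1) (t i) hti0] at hvan
    have hpow : ∀ k : ℕ, (t i) * ((t i) ^ ((r:ℝ) - 1/2) *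
        (t i) ^ ((k : ℝ) + 1/2 - ((r + 1 : ℕ) : ℝ))) = (t i) ^ (k : ℕ) := by
      intro k
      calc (t i) * ((t i) ^ ((r:ℝ) - 1/2) * (t i) ^ ((k : ℝ) + 1/2 - ((r + 1 : ℕ) : ℝ)))
          = (t i) ^ (1:ℝ) * (t i) ^ (((r:ℝ) - 1/2) + ((k : ℝ) + 1/2 - ((r + 1 : ℕ) : ℝ))) := by
            rw [Real.rpow_one, Real.rpow_add hti0]
        _ = (t i) ^ ((1:ℝ) + (((r:ℝ) - 1/2) + ((k : ℝ) + 1/2 - ((r + 1 : ℕ) : ℝ)))) :=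
            (Real.rpow_add hti0 _ _).symm
        _ = (t i) ^ ((k:ℝ)) := by push_cast; ring_nf
        _ = (t i) ^ (k : ℕ) := Real.rpow_natCast _ k
    have heval : P.eval (t i) = (t i) * ((t i) ^ ((r:ℝ) - 1/2) *
        ∑ k ∈ Finset.range (p.natDegree + 1),
          p.coeff k * (∏ j ∈ Finset.range (r + 1), ((k : ℝ) + 1/2 - j)) *
            (t i) ^ ((k : ℝ) + 1/2 - ((r + 1 : ℕ) : ℝ))) := by
      rw [hPdef, Polynomial.eval_finset_sum, Finset.mul_sum, Finset.mul_sum]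
      refine Finset.sum_congr rfl fun k hk => ?_
      simp only [Polynomial.eval_mul, Polynomial.eval_pow, Polynomial.eval_C,
        Polynomial.eval_X]
      rw [← hpow k]
      ring
    rw [heval, hvan, mul_zero]
  have hPne : P ≠ 0 := by
    intro h
    have h1 := hPcoeff p.natDegree
    rw [h, Polynomial.coeff_zero] at h1
    have hlc : p.coeff p.natDegree ≠ 0 := by
      rw [← Polynomial.leadingCoeff]
      exact Polynomial.leadingCoeff_ne_zero.mpr hpne
    have hcs := St11.csign r p.natDegree (by omega)
    have hcne : (∏ j ∈ Finset.range (r + 1), ((p.natDegree : ℝ) + 1/2 - j)) ≠ 0 := by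
      intro hc
      rw [hc, mul_zero] at hcs
      exact lt_irrefl _ hcs
    exact mul_ne_zero hlc hcne h1.symm
  set S := Finset.image t Finset.univ with hSdef
  have hScard : S.card = s := by
    rw [hSdef, Finset.card_image_of_injective _ ht, Finset.card_univ, Fintype.card_fin]
  have hSroots : ∀ x ∈ S, 0 < x ∧ P.eval x = 0 := by
    intro x hx
    rw [hSdef, Finset.mem_image] at hx
    obtain ⟨i, _, rfl⟩ := hx
    exact ⟨(ht01 i).1, hPeval i⟩
  obtain ⟨l, hAlt, hlen, -⟩ :=
    St11.descartes_chain P.natDegree P le_rfl hPne S hSroots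
  rw [hScard] at hlen
  have hsqr : (-1:ℝ)^r * (-1:ℝ)^r = 1 := by
    rw [← pow_add]; exact Even.neg_one_pow ⟨r, rfl⟩
  have hAui : ∀ i, i ≤ r → ((-1:ℝ)^i * p.coeff i) *
      ((-1:ℝ)^(r-i) * ∏ j ∈ Finset.range (r + 1), ((i : ℝ) + 1/2 - j))
      = (-1:ℝ)^r * P.coeff i := by
    intro i hi
    rw [hPcoeff i]
    have hpw : (-1:ℝ)^i * (-1:ℝ)^(r-i) = (-1:ℝ)^r := by
      rw [← pow_add]; congr 1; omega
    calc ((-1:ℝ)^i * p.coeff i) *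
        ((-1:ℝ)^(r-i) * ∏ j ∈ Finset.range (r + 1), ((i : ℝ) + 1/2 - j))
        = ((-1:ℝ)^i * (-1:ℝ)^(r-i)) *
          (p.coeff i * ∏ j ∈ Finset.range (r + 1), ((i : ℝ) + 1/2 - j)) := by ring
      _ = (-1:ℝ)^r * (p.coeff i * ∏ j ∈ Finset.range (r + 1), ((i : ℝ) + 1/2 - j)) := by
          rw [hpw]
  have hler : ∀ i : ℕ, P.coeff i ≠ 0 → i ≤ r := by
    intro i hi
    have : p.coeff i ≠ 0 := by
      intro h
      rw [hPcoeff i, h, zero_mul] at hi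
      exact hi rfl
    have := Polynomial.le_natDegree_of_ne_zero this
    omega
  have hAlt2 : St11.AltOn (fun k => (-1:ℝ)^k * p.coeff k) l := by
    refine hAlt.of_sign ?_ ?_
    · intro i _ j _ hij
      have hPi : P.coeff i ≠ 0 := fun h => by rw [h] at hij; simp at hij
      have hPj : P.coeff j ≠ 0 := fun h => by rw [h] at hij; simp at hij
      have hir := hler i hPi
      have hjr := hler j hPj
      have hui := St11.csign r i hir
      have huj := St11.csign r j hjr
      have hci := hAui i hir
      have hcj := hAui j hjr
      have hprod : (((-1:ℝ)^i * p.coeff i) * ((-1:ℝ)^j * p.coeff j)) *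
          ((((-1:ℝ)^(r-i) * ∏ k ∈ Finset.range (r + 1), ((i : ℝ) + 1/2 - k))) *
            (((-1:ℝ)^(r-j) * ∏ k ∈ Finset.range (r + 1), ((j : ℝ) + 1/2 - k))))
          = P.coeff i * P.coeff j := by
        calc (((-1:ℝ)^i * p.coeff i) * ((-1:ℝ)^j * p.coeff j)) *
            ((((-1:ℝ)^(r-i) * ∏ k ∈ Finset.range (r + 1), ((i : ℝ) + 1/2 - k))) *
              (((-1:ℝ)^(r-j) * ∏ k ∈ Finset.range (r + 1), ((j : ℝ) + 1/2 - k))))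
            = (((-1:ℝ)^i * p.coeff i) *
                ((-1:ℝ)^(r-i) * ∏ k ∈ Finset.range (r + 1), ((i : ℝ) + 1/2 - k))) *
              (((-1:ℝ)^j * p.coeff j) *
                ((-1:ℝ)^(r-j) * ∏ k ∈ Finset.range (r + 1), ((j : ℝ) + 1/2 - k))) := by ring
          _ = ((-1:ℝ)^r * P.coeff i) * ((-1:ℝ)^r * P.coeff j) := by rw [hci, hcj]
          _ = ((-1:ℝ)^r * (-1:ℝ)^r) * (P.coeff i * P.coeff j) := by ring
          _ = P.coeff i * P.coeff j := by rw [hsqr, one_mul]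
      nlinarith [mul_pos hui huj, hprod, hij]
    · intro i _ hPi
      intro h
      apply hPi
      rw [hPcoeff i]
      rcases mul_eq_zero.mp h with h' | h'
      · exact absurd h' (pow_ne_zero _ (by norm_num))
      · rw [h', zero_mul]
  have hAlt3 : St11.AltOn
      (fun k => (-1:ℝ)^k * ((1 - Polynomial.X)^m * q).coeff k) l := by
    rw [← hpdef]
    exact hAlt2
  obtain ⟨l', hAlt', hlen'⟩ := St11.strip_pow m q l hAlt3
  have hnodup : l'.Nodup := by
    have hp := List.isChain_iff_pairwise.mp hAlt'.1
    exact hp.imp (fun h => ne_of_lt h)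
  have hsub : ∀ k ∈ l', k < s := by
    intro k hk
    have h1 : (-1:ℝ)^k * q.coeff k ≠ 0 := hAlt'.2.2 k hk
    have h2 : q.coeff k ≠ 0 := fun h => h1 (by rw [h, mul_zero])
    have := Polynomial.le_natDegree_of_ne_zero h2
    omega
  have hcard : l'.toFinset.card = l'.length := List.toFinset_card_of_nodup hnodup
  have hsubset : l'.toFinset ⊆ Finset.range s := fun k hk =>
    Finset.mem_range.mpr (hsub k (List.mem_toFinset.mp hk))
  have hfin := Finset.card_le_card hsubset
  rw [hcard, Finset.card_range] at hfin
  omega
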